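/- If a single item has transaction-weighted utility below the least minimum utility value, then no itemset containing it is an HTWUI or an HUI: if i ∈ I satisfies TWU({i}) < LMU, then every nonempty itemset X ⊆ I with i ∈ X satisfies TWU(X) < MIU(X) and u(X) < MIU(X). -/
import Mathlib


open Finset

variable {ι τ : Type*}

/-- Utility of item `i` in transaction `t`: quantity times unit profit. -/
def itemU (pr : ι → ℝ) (q : ι → τ → ℕ) (i : ι) (t : τ) : ℝ :=
  (q i t : ℝ) * pr i

/-- Utility of itemset `X` in transaction `t`. -/
def setU (pr : ι → ℝ) (q : ι → τ → ℕ) (X : Finset ι) (t : τ) : ℝ :=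
  ∑ i ∈ X, itemU pr q i t

/-- Transaction utility of transaction `t` (with item set `Tr t`). -/
def tu (pr : ι → ℝ) (q : ι → τ → ℕ) (Tr : τ → Finset ι) (t : τ) : ℝ :=
  ∑ i ∈ Tr t, itemU pr q i t

/-- Transaction-weighted utility of itemset `X` in database `D`. -/
def TWU [DecidableEq ι] (pr : ι → ℝ) (q : ι → τ → ℕ) (Tr : τ → Finset ι)
    (D : Finset τ) (X : Finset ι) : ℝ :=
  ∑ t ∈ D.filter (fun t => X ⊆ Tr t), tu pr q Tr t

/-- Utility of itemset `X` in database `D`. -/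
def dbU [DecidableEq ι] (pr : ι → ℝ) (q : ι → τ → ℕ) (Tr : τ → Finset ι)
    (D : Finset τ) (X : Finset ι) : ℝ :=
  ∑ t ∈ D.filter (fun t => X ⊆ Tr t), setU pr q X t

/-- Minimum itemset utility of a nonempty itemset `X`. -/
def MIU (mu : ι → ℝ) (X : Finset ι) (hX : X.Nonempty) : ℝ :=
  X.inf' hX mu

/-- Remaining utility of itemset `X` in transaction `t`: total utility of the items of
`Tr t` that come strictly after every item of `X`. -/
def ru [LinearOrder ι] (pr : ι → ℝ) (q : ι → τ → ℕ) (Tr : τ → Finset ι)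
    (X : Finset ι) (t : τ) : ℝ :=
  ∑ i ∈ (Tr t).filter (fun i => ∀ x ∈ X, x < i), itemU pr q i t

/-- Sum of the remaining utilities of itemset `X` over the database `D` (`X.RU`). -/
def dbRU [LinearOrder ι] (pr : ι → ℝ) (q : ι → τ → ℕ) (Tr : τ → Finset ι)
    (D : Finset τ) (X : Finset ι) : ℝ :=
  ∑ t ∈ D.filter (fun t => X ⊆ Tr t), ru pr q Tr X t

/-- if the TWU of a single item is below `LMU = min_{i ∈ I} mu(i)`, then no
itemset containing it is an HTWUI or an HUI. -/
theorem single_item_below_LMU_prunes [DecidableEq ι] (I : Finset ι) (hI : I.Nonempty)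
    (pr mu : ι → ℝ) (hpr : ∀ i, 0 ≤ pr i) (hmu : ∀ i, 0 < mu i)
    (D : Finset τ) (Tr : τ → Finset ι) (q : ι → τ → ℕ)
    (hq : ∀ t ∈ D, ∀ i ∈ Tr t, 0 < q i t) (hTr : ∀ t ∈ D, Tr t ⊆ I)
    (i : ι) (hiI : i ∈ I)
    (hlow : TWU pr q Tr D {i} < MIU mu I hI)
    (X : Finset ι) (hX : X.Nonempty) (hiX : i ∈ X) (hXI : X ⊆ I) :
    TWU pr q Tr D X < MIU mu X hX ∧ dbU pr q Tr D X < MIU mu X hX := by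

  have htu_nonneg : ∀ t ∈ D, 0 ≤ tu pr q Tr t := by
    intro t _
    exact Finset.sum_nonneg fun j _ => mul_nonneg (Nat.cast_nonneg _) (hpr j)
  have hTWU : TWU pr q Tr D X ≤ TWU pr q Tr D {i} := by
    apply Finset.sum_le_sum_of_subset_of_nonneg
    · intro t ht
      simp only [Finset.mem_filter] at ht ⊢
      exact ⟨ht.1, Finset.singleton_subset_iff.mpr (ht.2 hiX)⟩
    · intro t ht _
      exact htu_nonneg t (Finset.mem_filter.mp ht).1
  have hdbU : dbU pr q Tr D X ≤ TWU pr q Tr D X := by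
    apply Finset.sum_le_sum
    intro t ht
    rw [Finset.mem_filter] at ht
    exact Finset.sum_le_sum_of_subset_of_nonneg ht.2
      (fun j _ _ => mul_nonneg (Nat.cast_nonneg _) (hpr j))
  have hMIU : MIU mu I hI ≤ MIU mu X hX := by
    apply Finset.le_inf'
    intro j hj
    exact Finset.inf'_le mu (hXI hj)
  exact ⟨lt_of_le_of_lt hTWU (lt_of_lt_of_le hlow hMIU),
    lt_of_le_of_lt hdbU (lt_of_le_of_lt hTWU (lt_of_lt_of_le hlow hMIU))⟩
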